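/- For a surjective fibration f : X → Yⁿ and any n ≥ 1, the higher topological complexity satisfies TC_n(f) ≤ TC_{n+1}(f). -/

import Mathlib

/-- The (higher) homotopic distance of a family of continuous maps `f i : X → Y`:
the least `l` such that `X` admits an open cover by `l` open sets on each of which
all the maps restrict to pairwise homotopic maps (`∞` if no such cover exists). -/
noncomputable def homDist {X Y : Type*} [TopologicalSpace X] [TopologicalSpace Y]
    {k : ℕ} (f : Fin k → C(X, Y)) : ℕ∞ :=
  sInf ((fun n : ℕ => (n : ℕ∞)) '' {n : ℕ | ∃ U : Fin n → Set X,
    (∀ j, IsOpen (U j)) ∧ (⋃ j, U j) = Set.univ ∧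
    ∀ j i i', ((f i).restrict (U j)).Homotopic ((f i').restrict (U j))})

/-- Homotopic distance of two maps. -/
noncomputable def homDist2 {X Y : Type*} [TopologicalSpace X] [TopologicalSpace Y]
    (f g : C(X, Y)) : ℕ∞ :=
  homDist ![f, g]

universe u

/-- A continuous map is a fibration if it has the homotopy lifting property with respect
to all spaces (in universe `u`). -/
def IsFibration {X Y : Type*} [TopologicalSpace X] [TopologicalSpace Y]
    (f : C(X, Y)) : Prop :=
  ∀ (Z : Type u) [TopologicalSpace Z] (g : C(Z, X)) (G : C(Z × unitInterval, Y)),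
    (∀ z, G (z, 0) = f (g z)) →
    ∃ G' : C(Z × unitInterval, X),
      (∀ p, f (G' p) = G p) ∧ ∀ z, G' (z, 0) = g z

/-- The Schwarz genus of a map `p : E → B`: the least number of open sets covering `B`
over each of which `p` admits a continuous local section. -/
noncomputable def secat {E B : Type*} [TopologicalSpace E] [TopologicalSpace B]
    (p : C(E, B)) : ℕ∞ :=
  sInf ((fun n : ℕ => (n : ℕ∞)) '' {n : ℕ | ∃ U : Fin n → Set B,
    (∀ j, IsOpen (U j)) ∧ (⋃ j, U j) = Set.univ ∧
    ∀ j, ∃ s : C(U j, E), ∀ x : U j, p (s x) = (x : B)})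

/-- The fibration `π_g : X^I → X × Y`, `β ↦ (β 0, g (β 1))`, associated to `g : X → Y`. -/
noncomputable def piMap {X Y : Type*} [TopologicalSpace X] [TopologicalSpace Y]
    (g : C(X, Y)) : C(C(unitInterval, X), X × Y) :=
  ⟨fun β => (β 0, g (β 1)),
    (continuous_eval_const 0).prodMk
      (g.continuous.comp (continuous_eval_const 1))⟩

/-- The topological complexity of a map `g : X → Y`, as the Schwarz genus of `π_g`. -/
noncomputable def TCmap {X Y : Type*} [TopologicalSpace X] [TopologicalSpace Y]
    (g : C(X, Y)) : ℕ∞ :=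
  secat (piMap g)

/-- Projection `pᵢ : Xⁿ → X` as a continuous map. -/
def projC {X : Type*} [TopologicalSpace X] {n : ℕ} (i : Fin n) : C((Fin n → X), X) :=
  ⟨fun x => x i, continuous_apply i⟩

theorem TCn_le_TCn_succ {X Y : Type*} [TopologicalSpace X] [TopologicalSpace Y]
    {n : ℕ} (hn : 1 ≤ n) (f : C(X, Fin n → Y)) (hsurj : Function.Surjective f)
    (hf : IsFibration.{u} f) :
    homDist (fun i : Fin n => f.comp (projC i)) ≤
      homDist (fun i : Fin (n + 1) => f.comp (projC i)) := by
  apply sInf_le_sInf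
  apply Set.image_mono
  rintro m ⟨U, hUo, hUc, hUh⟩
  have hr : ∀ i : Fin n, (⟨min i (n-1), by omega⟩ : Fin n) = i := by
    intro i
    ext
    simp only
    omega
  set q : C((Fin n → X), (Fin (n+1) → X)) :=
    ⟨fun x i => x ⟨min i (n-1), by omega⟩, continuous_pi fun i => continuous_apply _⟩ with hq
  refine ⟨fun j => q ⁻¹' U j, fun j => (hUo j).preimage q.continuous, ?_, ?_⟩
  · rw [← Set.preimage_iUnion, hUc, Set.preimage_univ]
  · intro j i i'
    set mmap : C(↥(⇑q ⁻¹' U j), ↥(U j)) :=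
      ⟨fun x => ⟨q x.1, x.2⟩,
        Continuous.subtype_mk (q.continuous.comp continuous_subtype_val) (fun x => x.2)⟩
      with hm
    have key : ∀ i : Fin n, ((f.comp (projC i)).restrict (⇑q ⁻¹' U j)) =
        ((f.comp (projC (Fin.castSucc i))).restrict (U j)).comp mmap := by
      intro i
      have hidx : (⟨((Fin.castSucc i : Fin (n+1)) : ℕ) ⊓ (n - 1), by omega⟩ : Fin n) = i := by
        ext
        simp only [Fin.coe_castSucc]
        omega
      ext x y
      simp only [hm, ContinuousMap.restrict_apply, ContinuousMap.comp_apply,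
        ContinuousMap.coe_mk, projC, hq]
      exact (congrFun (congrArg f (congrArg (x : Fin n → X) hidx)) y).symm
    show ((f.comp (projC i)).restrict (⇑q ⁻¹' U j)).Homotopic
        ((f.comp (projC i')).restrict (⇑q ⁻¹' U j))
    rw [key i, key i']
    exact ContinuousMap.Homotopic.comp (hUh j i.castSucc i'.castSucc) (ContinuousMap.Homotopic.refl mmap)
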